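/- Let (X,T) and (Y,S) be topological dynamical systems. Then: (1) if both X and Y have a dense set of minimal points, so does the product system (X×Y, T×S); (2) if X admits an invariant Borel probability measure with full support and Y has a dense set of recurrent points, then (X×Y, T×S) has a dense set of recurrent points; (3) there exist transitive t.d.s. (X,T) and (Y,S) such that (X×Y, T×S) does not have a dense set of recurrent points. -/

import Mathlib

open Set Filter Topology Function

namespace PaperFormal

/-- The return-time set `N(x,U) = {n ∈ ℤ₊ : Tⁿ x ∈ U}`. -/
def retTimes {X : Type} (T : X → X) (x : X) (U : Set X) : Set ℕ :=
  {n : ℕ | T^[n] x ∈ U}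

/-- A point is recurrent if `N(x,U)` is infinite for every neighborhood `U` of `x`. -/
def RecurrentPt {X : Type} [TopologicalSpace X] (T : X → X) (x : X) : Prop :=
  ∀ U ∈ nhds x, (retTimes T x U).Infinite

/-- The (forward) orbit closure of a point. -/
def orbitClosure {X : Type} [TopologicalSpace X] (T : X → X) (x : X) : Set X :=
  closure (Set.range fun n : ℕ => T^[n] x)

/-- A pair `(x,y)` is proximal if `lim T^{nᵢ} x = lim T^{nᵢ} y` along some sequence `nᵢ`. -/
def ProximalPair {X : Type} [TopologicalSpace X] (T : X → X) (x y : X) : Prop :=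
  ∃ (u : ℕ → ℕ) (z : X),
    Tendsto (fun i => T^[u i] x) atTop (nhds z) ∧
    Tendsto (fun i => T^[u i] y) atTop (nhds z)

/-- A point `x` is distal if every `y` in its orbit closure proximal to `x` equals `x`. -/
def DistalPt {X : Type} [TopologicalSpace X] (T : X → X) (x : X) : Prop :=
  ∀ y ∈ orbitClosure T x, ProximalPair T x y → y = x

/-- `A` is a minimal set: nonempty, closed, invariant, with no proper such subset. -/
def IsMinimalSet {X : Type} [TopologicalSpace X] (T : X → X) (A : Set X) : Prop :=
  A.Nonempty ∧ IsClosed A ∧ Set.MapsTo T A A ∧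
    ∀ B ⊆ A, B.Nonempty → IsClosed B → Set.MapsTo T B B → B = A

/-- A point is minimal (almost periodic) if its orbit closure is a minimal set. -/
def IsMinimalPt {X : Type} [TopologicalSpace X] (T : X → X) (x : X) : Prop :=
  IsMinimalSet T (orbitClosure T x)

/-- A minimal system: no proper nonempty closed invariant subset. -/
def MinimalSys {X : Type} [TopologicalSpace X] (T : X → X) : Prop :=
  ∀ B : Set X, B.Nonempty → IsClosed B → Set.MapsTo T B B → B = Set.univ

/-- A transitive system: `N(U,V)` is infinite for all opene `U`, `V`. -/
def TransitiveSys {X : Type} [TopologicalSpace X] (T : X → X) : Prop :=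
  ∀ U V : Set X, IsOpen U → IsOpen V → U.Nonempty → V.Nonempty →
    {n : ℕ | (U ∩ T^[n] ⁻¹' V).Nonempty}.Infinite

/-- Transitivity of the subsystem on an invariant subset `A` (relative open sets). -/
def TransitiveOn {X : Type} [TopologicalSpace X] (T : X → X) (A : Set X) : Prop :=
  ∀ U V : Set X, IsOpen U → IsOpen V → (U ∩ A).Nonempty → (V ∩ A).Nonempty →
    {n : ℕ | (U ∩ A ∩ T^[n] ⁻¹' V).Nonempty}.Infinite

/-- A transitive point: a point with dense forward orbit. -/
def TransPt {X : Type} [TopologicalSpace X] (T : X → X) (x : X) : Prop :=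
  Dense (Set.range fun n : ℕ => T^[n] x)

/-- Finite sums of the sequence `p` over nonempty finite index sets contained in `[n,∞)`. -/
def FSfrom (p : ℕ → ℕ) (n : ℕ) : Set ℕ :=
  {m | ∃ α : Finset ℕ, α.Nonempty ∧ (∀ i ∈ α, n ≤ i) ∧ m = ∑ i ∈ α, p i}

/-- Finite sums of the sequence `p` over nonempty finite index sets. -/
def FS (p : ℕ → ℕ) : Set ℕ := FSfrom p 0

/-- An IP set: a set containing all finite sums of some sequence of natural numbers. -/
def IPSet (A : Set ℕ) : Prop :=
  ∃ p : ℕ → ℕ, (∀ i, 0 < p i) ∧ FS p ⊆ A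

/-- An IP* set: a set meeting every IP set. -/
def IPStar (A : Set ℕ) : Prop :=
  ∀ B : Set ℕ, IPSet B → (A ∩ B).Nonempty

/-- A syndetic set: a set with bounded gaps. -/
def Syndetic (S : Set ℕ) : Prop :=
  ∃ N : ℕ, ∀ m : ℕ, ∃ k ∈ S, m ≤ k ∧ k ≤ m + N

/-- A thick set: a set containing arbitrarily long runs of consecutive integers. -/
def Thick (S : Set ℕ) : Prop :=
  ∀ n : ℕ, ∃ m : ℕ, ∀ i ≤ n, m + i ∈ S

/-- A piecewise syndetic set: an intersection of a syndetic set with a thick set. -/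
def PiecewiseSyndetic (A : Set ℕ) : Prop :=
  ∃ S₁ S₂ : Set ℕ, Syndetic S₁ ∧ Thick S₂ ∧ A = S₁ ∩ S₂

/-- A thickly syndetic set: a set meeting every piecewise syndetic set. -/
def ThicklySyndetic (A : Set ℕ) : Prop :=
  ∀ B : Set ℕ, PiecewiseSyndetic B → (A ∩ B).Nonempty

/-- `x` is `F`-recurrent for the family `F` if `N(x,U) ∈ F` for every neighborhood `U`. -/
def FRecurrentPt {X : Type} [TopologicalSpace X] (F : Set (Set ℕ)) (T : X → X) (x : X) :
    Prop :=
  ∀ U ∈ nhds x, retTimes T x U ∈ F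

/-- `x` is `F`-product recurrent: `(x,y)` is recurrent for every `F`-recurrent point `y`
in any topological dynamical system `(Y,S)`. -/
def FProductRecurrent {X : Type} [TopologicalSpace X] (F : Set (Set ℕ)) (T : X → X)
    (x : X) : Prop :=
  ∀ (Y : Type) [MetricSpace Y] [CompactSpace Y] (S : Y → Y),
    Continuous S → Function.Surjective S →
      ∀ y : Y, FRecurrentPt F S y → RecurrentPt (Prod.map T S) (x, y)

/-- A joining of `(X,T)` and `(Y,S)`: a nonempty closed invariant subset of `X × Y`
projecting onto both coordinates. -/
def Joining {X Y : Type} [TopologicalSpace X] [TopologicalSpace Y]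
    (T : X → X) (S : Y → Y) (J : Set (X × Y)) : Prop :=
  J.Nonempty ∧ IsClosed J ∧ Set.MapsTo (Prod.map T S) J J ∧
    Prod.fst '' J = Set.univ ∧ Prod.snd '' J = Set.univ

/-- Two systems are disjoint if their only joining is the full product. -/
def DisjointSys {X Y : Type} [TopologicalSpace X] [TopologicalSpace Y]
    (T : X → X) (S : Y → Y) : Prop :=
  ∀ J : Set (X × Y), Joining T S J → J = Set.univ

/-- Property (★) of a point: for each neighborhood `V` of `x` there is `n` such that for
every finite set `S` whose distinct elements are at distance `≥ n`, some common shift `ℓ`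
puts all of `T^{s+ℓ} x`, `s ∈ S`, inside `V`. -/
def StarProp {X : Type} [TopologicalSpace X] (T : X → X) (x : X) : Prop :=
  ∀ V ∈ nhds x, ∃ n : ℕ, ∀ S : Finset ℕ,
    (∀ s ∈ S, ∀ t ∈ S, s < t → n ≤ t - s) →
      ∃ ℓ : ℕ, ∀ s ∈ S, T^[s + ℓ] x ∈ V

/-- `F` is an independence set for the pair `(U₀, U₁)`. -/
def IndepSet {X : Type} (T : X → X) (U₀ U₁ : Set X) (F : Set ℕ) : Prop :=
  ∀ J : Finset ℕ, ↑J ⊆ F → J.Nonempty → ∀ s : ℕ → Bool,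
    (⋂ j ∈ J, T^[j] ⁻¹' (if s j then U₁ else U₀)).Nonempty

/-- Zorn: every nonempty closed invariant set in a compact space contains a minimal set. -/
theorem exists_minimalSet {Z : Type} [TopologicalSpace Z] [CompactSpace Z]
    (f : Z → Z) (C : Set Z) (hC : IsClosed C) (hne : C.Nonempty) (hinv : MapsTo f C C) :
    ∃ M ⊆ C, IsMinimalSet f M := by
  set S : Set (Set Z) := {D | D ⊆ C ∧ D.Nonempty ∧ IsClosed D ∧ MapsTo f D D} with hS
  have hzorn := zorn_superset_nonempty S ?_ C ⟨Subset.rfl, hne, hC, hinv⟩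
  · obtain ⟨M, hMC, hmin⟩ := hzorn
    refine ⟨M, hMC, hmin.1.2.1, hmin.1.2.2.1, hmin.1.2.2.2, ?_⟩
    intro B hB hBne hBcl hBinv
    exact Subset.antisymm hB (hmin.2 (y := B) ⟨hB.trans hmin.1.1, hBne, hBcl, hBinv⟩ hB)
  · intro c hcS hchain hcne
    refine ⟨⋂₀ c, ⟨?_, ?_, ?_, ?_⟩, fun s hs => sInter_subset_of_mem hs⟩
    · obtain ⟨s, hs⟩ := hcne
      exact (sInter_subset_of_mem hs).trans (hcS hs).1
    · have : Nonempty c := hcne.to_subtype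
      exact IsCompact.nonempty_sInter_of_directed_nonempty_isCompact_isClosed
        (fun x hx y hy => by
          rcases hchain.total hx hy with h | h
          · exact ⟨x, hx, Subset.rfl, h⟩
          · exact ⟨y, hy, h, Subset.rfl⟩)
        (fun U hU => (hcS hU).2.1)
        (fun U hU => (hcS hU).2.2.1.isCompact)
        (fun U hU => (hcS hU).2.2.1)
    · exact isClosed_sInter (fun U hU => (hcS hU).2.2.1)
    · intro x hx
      exact fun U hU => (hcS hU).2.2.2 (hx U hU)

theorem orbitClosure_isClosed {X : Type} [TopologicalSpace X] (T : X → X) (x : X) :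
    IsClosed (orbitClosure T x) := isClosed_closure

theorem mem_orbitClosure_self {X : Type} [TopologicalSpace X] (T : X → X) (x : X) :
    x ∈ orbitClosure T x :=
  subset_closure ⟨0, rfl⟩

theorem orbitClosure_mapsTo {X : Type} [TopologicalSpace X] (T : X → X) (hT : Continuous T)
    (x : X) : MapsTo T (orbitClosure T x) (orbitClosure T x) := by
  intro z hz
  have h1 : T '' closure (Set.range fun n : ℕ => T^[n] x) ⊆
      closure (T '' Set.range fun n : ℕ => T^[n] x) := hT.continuousOn.image_closure
  have h2 : (T '' Set.range fun n : ℕ => T^[n] x) ⊆ Set.range fun n : ℕ => T^[n] x := by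
    rintro - ⟨-, ⟨n, rfl⟩, rfl⟩
    exact ⟨n + 1, Function.iterate_succ_apply' T n x⟩
  exact closure_mono h2 (h1 ⟨z, hz, rfl⟩)

/-- orbit stays inside a closed invariant set containing the point -/
theorem orbitClosure_subset {X : Type} [TopologicalSpace X] (T : X → X) (x : X)
    {M : Set X} (hM : IsClosed M) (hinv : MapsTo T M M) (hx : x ∈ M) :
    orbitClosure T x ⊆ M := by
  apply hM.closure_subset_iff.2
  rintro - ⟨n, rfl⟩
  simp only
  induction n with
  | zero => exact hx
  | succ n ih => rw [Function.iterate_succ_apply']; exact hinv ih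

/-- every point of a minimal set is a minimal point, with orbit closure the whole set -/
theorem isMinimalPt_of_mem {X : Type} [TopologicalSpace X] {T : X → X} (hT : Continuous T)
    {M : Set X} (hM : IsMinimalSet T M) {z : X} (hz : z ∈ M) :
    IsMinimalPt T z ∧ orbitClosure T z = M := by
  have hsub : orbitClosure T z ⊆ M := orbitClosure_subset T z hM.2.1 hM.2.2.1 hz
  have heq : orbitClosure T z = M :=
    hM.2.2.2 _ hsub ⟨z, mem_orbitClosure_self T z⟩ (orbitClosure_isClosed T z)
      (orbitClosure_mapsTo T hT z)
  refine ⟨?_, heq⟩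
  rw [IsMinimalPt, heq]
  exact hM

/-- dense-orbit property in a minimal set -/
theorem minimal_dense_orbit {X : Type} [TopologicalSpace X] {T : X → X} (hT : Continuous T)
    {M : Set X} (hM : IsMinimalSet T M) {z : X} (hz : z ∈ M) {O : Set X} (hO : IsOpen O)
    (hOM : (O ∩ M).Nonempty) : ∃ n : ℕ, T^[n] z ∈ O := by
  have heq := (isMinimalPt_of_mem hT hM hz).2
  obtain ⟨w, hwO, hwM⟩ := hOM
  rw [← heq] at hwM
  obtain ⟨-, h1, n, rfl⟩ := mem_closure_iff.1 hwM O hO hwO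
  exact ⟨n, h1⟩

section crux
variable {X Y : Type} [MetricSpace X] [CompactSpace X] [MetricSpace Y] [CompactSpace Y]
  {T : X → X} {S : Y → Y}

/-- image of a minimal set under the map m ↦ (m.1, (σ^[n] m).2) is a minimal set. -/
theorem psi_minimal (hT : Continuous T) (hS : Continuous S)
    {M : Set (X × Y)} (hM : IsMinimalSet (Prod.map T S) M) (n : ℕ) :
    IsMinimalSet (Prod.map T S) ((fun m : X × Y => (m.1, ((Prod.map T S)^[n] m).2)) '' M) := by
  set σ := Prod.map T S with hσ
  have hσc : Continuous σ := hT.prodMap hS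
  set ψ : X × Y → X × Y := fun m => (m.1, (σ^[n] m).2) with hψ
  have hψc : Continuous ψ := by
    exact continuous_fst.prodMk ((continuous_snd.comp (hσc.iterate n)))
  have hcomm : ∀ m : X × Y, σ (ψ m) = ψ (σ m) := by
    intro m
    show (T m.1, S ((σ^[n] m).2)) = ((σ m).1, (σ^[n] (σ m)).2)
    rw [← Function.iterate_succ_apply σ n m, Function.iterate_succ_apply' σ n m]
    rfl
  have hMcpt : IsCompact M := hM.2.1.isCompact
  have himgcl : IsClosed (ψ '' M) := (hMcpt.image hψc).isClosed
  refine ⟨hM.1.image ψ, himgcl, ?_, ?_⟩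
  · rintro - ⟨m, hm, rfl⟩
    exact ⟨σ m, hM.2.2.1 hm, (hcomm m).symm⟩
  · intro C hC hCne hCcl hCinv
    have h1 : M ∩ ψ ⁻¹' C = M := by
      apply hM.2.2.2
      · exact inter_subset_left
      · obtain ⟨c, hc⟩ := hCne
        obtain ⟨m, hm, rfl⟩ := hC hc
        exact ⟨m, hm, hc⟩
      · exact hM.2.1.inter (hCcl.preimage hψc)
      · rintro m ⟨hm1, hm2⟩
        refine ⟨hM.2.2.1 hm1, ?_⟩
        show ψ (σ m) ∈ C
        rw [← hcomm m]
        exact hCinv hm2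
    apply Subset.antisymm hC
    rintro - ⟨m, hm, rfl⟩
    have : m ∈ M ∩ ψ ⁻¹' C := h1.symm ▸ hm
    exact this.2

end crux

section crux2
variable {X Y : Type} [MetricSpace X] [CompactSpace X] [MetricSpace Y] [CompactSpace Y]
  {T : X → X} {S : Y → Y}

theorem prodMinimalCrux (hT : Continuous T) (hS : Continuous S)
    {A : Set X} (hA : IsMinimalSet T A) {B : Set Y} (hB : IsMinimalSet S B)
    {U : Set X} {V : Set Y} (hU : IsOpen U) (hV : IsOpen V)
    (hUA : (U ∩ A).Nonempty) (hVB : (V ∩ B).Nonempty) :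
    ∃ z ∈ U ×ˢ V, IsMinimalPt (Prod.map T S) z := by
  set σ := Prod.map T S with hσ
  have hσc : Continuous σ := hT.prodMap hS
  -- A ×ˢ B is closed invariant nonempty
  obtain ⟨M, hMAB, hM⟩ := exists_minimalSet σ (A ×ˢ B) (hA.2.1.prod hB.2.1)
    (hA.1.prod hB.1) (fun m hm => ⟨hA.2.2.1 hm.1, hB.2.2.1 hm.2⟩)
  -- fst '' M = A
  have hfst : Prod.fst '' M = A := by
    apply hA.2.2.2
    · rintro - ⟨m, hm, rfl⟩; exact (hMAB hm).1
    · exact hM.1.image _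
    · exact ((hM.2.1.isCompact).image continuous_fst).isClosed
    · rintro - ⟨m, hm, rfl⟩; exact ⟨σ m, hM.2.2.1 hm, rfl⟩
  have hsnd : Prod.snd '' M = B := by
    apply hB.2.2.2
    · rintro - ⟨m, hm, rfl⟩; exact (hMAB hm).2
    · exact hM.1.image _
    · exact ((hM.2.1.isCompact).image continuous_snd).isClosed
    · rintro - ⟨m, hm, rfl⟩; exact ⟨σ m, hM.2.2.1 hm, rfl⟩
  -- a point m ∈ M with m.1 ∈ U
  obtain ⟨a, haU, haA⟩ := hUA
  obtain ⟨m, hmM, hm1⟩ : ∃ m ∈ M, m.1 = a := by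
    have := hfst ▸ haA
    obtain ⟨m, hm, h⟩ := this
    exact ⟨m, hm, h⟩
  -- the open set snd ⁻¹' V meets M
  obtain ⟨b, hbV, hbB⟩ := hVB
  have hOM : ((Prod.snd ⁻¹' V) ∩ M).Nonempty := by
    obtain ⟨m', hm', h'⟩ : ∃ m' ∈ M, m'.2 = b := by
      have := hsnd ▸ hbB
      obtain ⟨m', hm', h⟩ := this
      exact ⟨m', hm', h⟩
    exact ⟨m', by simp [h', hbV], hm'⟩
  obtain ⟨n, hn⟩ := minimal_dense_orbit hσc hM hmM (hV.preimage continuous_snd) hOM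
  refine ⟨(m.1, (σ^[n] m).2), ⟨hm1 ▸ haU, hn⟩, ?_⟩
  exact (isMinimalPt_of_mem hσc (psi_minimal hT hS hM n) ⟨m, hmM, rfl⟩).1

theorem part1 (hT : Continuous T) (_hTs : Function.Surjective T)
    (hS : Continuous S) (_hSs : Function.Surjective S)
    (hDX : Dense {x : X | IsMinimalPt T x}) (hDY : Dense {y : Y | IsMinimalPt S y}) :
    Dense {p : X × Y | IsMinimalPt (Prod.map T S) p} := by
  rw [dense_iff_inter_open]
  intro W hW hWne
  obtain ⟨p, hp⟩ := hWne
  obtain ⟨U, V, hU, hpU, hV, hpV, hUVW⟩ := mem_nhds_prod_iff'.1 (hW.mem_nhds hp)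
  obtain ⟨x, hxU, hx⟩ := (dense_iff_inter_open.1 hDX) U hU ⟨p.1, hpU⟩
  obtain ⟨y, hyV, hy⟩ := (dense_iff_inter_open.1 hDY) V hV ⟨p.2, hpV⟩
  have hxA : x ∈ orbitClosure T x := subset_closure ⟨0, rfl⟩
  have hyB : y ∈ orbitClosure S y := subset_closure ⟨0, rfl⟩
  obtain ⟨z, hzUV, hz⟩ := prodMinimalCrux hT hS hx hy hU hV ⟨x, hxU, hxA⟩ ⟨y, hyV, hyB⟩
  exact ⟨z, hUVW hzUV, hz⟩

end crux2

/-- dependent-choice style recursion helper -/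
theorem seq_rec {α : Type} (P : ℕ → α → Prop) (R : ℕ → α → α → Prop) (a0 : α) (h0 : P 0 a0)
    (hstep : ∀ k a, P k a → ∃ b, P (k + 1) b ∧ R k a b) :
    ∃ f : ℕ → α, f 0 = a0 ∧ (∀ k, P k (f k)) ∧ ∀ k, R k (f k) (f (k + 1)) := by
  choose! F hF1 hF2 using hstep
  have hP : ∀ k, P k (Nat.rec a0 F k : α) := by
    intro k
    induction k with
    | zero => exact h0
    | succ k ih => exact hF1 k _ ih
  exact ⟨fun k => Nat.rec a0 F k, rfl, hP, fun k => hF2 k _ (hP k)⟩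

/-- measure pigeonhole: countably many sets of measure ≥ c > 0 in a probability space,
two of them intersect positively -/
theorem exists_pos_measure_inter {α : Type} [MeasurableSpace α] (μ : MeasureTheory.Measure α)
    [MeasureTheory.IsProbabilityMeasure μ] (A : ℕ → Set α)
    (hA : ∀ i, MeasurableSet (A i)) (c : ENNReal) (hc : c ≠ 0) (hμ : ∀ i, c ≤ μ (A i)) :
    ∃ i j, i < j ∧ μ (A i ∩ A j) ≠ 0 := by
  by_contra h
  push_neg at h
  have hnull : ∀ i j, i ≠ j → μ (A i ∩ A j) = 0 := by
    intro i j hij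
    rcases lt_or_gt_of_ne hij with h' | h'
    · exact h i j h'
    · rw [Set.inter_comm]; exact h j i h'
  set Z : Set α := ⋃ p : ℕ × ℕ, if p.1 ≠ p.2 then A p.1 ∩ A p.2 else ∅ with hZdef
  have hZmeas : MeasurableSet Z := by
    apply MeasurableSet.iUnion
    rintro ⟨i, j⟩
    dsimp only
    split
    · exact (hA i).inter (hA j)
    · exact MeasurableSet.empty
  have hZ : μ Z = 0 := by
    apply MeasureTheory.measure_iUnion_null
    rintro ⟨i, j⟩
    by_cases hij : i ≠ j
    · simpa [hij] using hnull i j hij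
    · simp [hij]
  set A' : ℕ → Set α := fun i => A i \ Z with hA'def
  have hdisj : Pairwise (Function.onFun Disjoint A') := by
    intro i j hij
    rw [Function.onFun, Set.disjoint_left]
    rintro a ⟨haA, haZ⟩ ⟨haA', -⟩
    exact haZ (Set.mem_iUnion.2 ⟨(i, j), by simp [hij, haA, haA']⟩)
  have hsum : μ (⋃ i, A' i) = ∑' i, μ (A' i) :=
    MeasureTheory.measure_iUnion hdisj fun i => (hA i).diff hZmeas
  have hA'eq : ∀ i, μ (A' i) = μ (A i) := fun i => MeasureTheory.measure_diff_null hZ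
  have htop : (⊤ : ENNReal) ≤ μ (⋃ i, A' i) := by
    rw [hsum]
    calc (⊤ : ENNReal) = ∑' _ : ℕ, c := (ENNReal.tsum_const_eq_top_of_ne_zero hc).symm
    _ ≤ ∑' i, μ (A' i) := ENNReal.tsum_le_tsum fun i => (hA'eq i).symm ▸ hμ i
  have : (⊤ : ENNReal) ≤ 1 := htop.trans ((MeasureTheory.measure_mono (Set.subset_univ _)).trans
    (le_of_eq (MeasureTheory.measure_univ)))
  simp at this

section part2
variable {X Y : Type} [MetricSpace X] [CompactSpace X] [MeasurableSpace X] [BorelSpace X]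
  [MetricSpace Y] [CompactSpace Y] {T : X → X} {S : Y → Y}

theorem part2 (hT : Continuous T) (_hTs : Function.Surjective T)
    (hS : Continuous S) (_hSs : Function.Surjective S)
    (hmeas : ∃ μ : MeasureTheory.Measure X, MeasureTheory.IsProbabilityMeasure μ ∧
      (∀ B : Set X, MeasurableSet B → μ (T ⁻¹' B) = μ B) ∧
      ∀ U : Set X, IsOpen U → U.Nonempty → 0 < μ U)
    (hDY : Dense {y : Y | RecurrentPt S y}) :
    Dense {p : X × Y | RecurrentPt (Prod.map T S) p} := by
  obtain ⟨μ, hprob, hinv, hsupp⟩ := hmeas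
  rw [dense_iff_inter_open]
  intro W hW hWne
  obtain ⟨p0, hp0⟩ := hWne
  obtain ⟨U, V, hU, hpU, hV, hpV, hUVW⟩ := mem_nhds_prod_iff'.1 (hW.mem_nhds hp0)
  obtain ⟨y, hyV, hyrec⟩ := (dense_iff_inter_open.1 hDY) V hV ⟨p0.2, hpV⟩
  -- iterate invariance
  have hTm : Measurable T := hT.measurable
  have hiter : ∀ (n : ℕ) (B : Set X), MeasurableSet B → μ (T^[n] ⁻¹' B) = μ B := by
    intro n
    induction n with
    | zero => intro B _; simp
    | succ n ih =>
      intro B hB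
      have : T^[n + 1] ⁻¹' B = T^[n] ⁻¹' (T ⁻¹' B) := by
        ext x
        simp only [Set.mem_preimage, Function.iterate_succ_apply' T n x]
      rw [this, ih _ (hTm hB), hinv B hB]
  ------------------------------------------------------------------
  -- Y side : recursive construction of shrinking neighborhoods and times
  ------------------------------------------------------------------
  have hYrec : ∃ f : ℕ → Set Y × ℕ, f 0 = (V ∩ Metric.ball y 1, 0) ∧
      (∀ k, IsOpen (f k).1 ∧ y ∈ (f k).1 ∧ (f k).1 ⊆ Metric.ball y ((1/2 : ℝ) ^ k) ∧
        (f k).1 ⊆ V) ∧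
      (∀ k, (f k).2 < (f (k + 1)).2 ∧ (f (k + 1)).1 ⊆ (f k).1 ∧
        ∀ z ∈ (f (k + 1)).1, S^[(f (k + 1)).2] z ∈ (f k).1) := by
    have h0 : IsOpen (V ∩ Metric.ball y 1, 0).1 ∧ y ∈ (V ∩ Metric.ball y 1, 0).1 ∧
        (V ∩ Metric.ball y 1, 0).1 ⊆ Metric.ball y ((1/2 : ℝ) ^ 0) ∧
        (V ∩ Metric.ball y 1, 0).1 ⊆ V :=
      ⟨hV.inter Metric.isOpen_ball, ⟨hyV, by simpa using Metric.mem_ball_self one_pos⟩,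
        by simpa using Set.inter_subset_right, Set.inter_subset_left⟩
    have hstep : ∀ (k : ℕ) (a : Set Y × ℕ),
        (IsOpen a.1 ∧ y ∈ a.1 ∧ a.1 ⊆ Metric.ball y ((1/2 : ℝ) ^ k) ∧ a.1 ⊆ V) →
        ∃ b : Set Y × ℕ,
          (IsOpen b.1 ∧ y ∈ b.1 ∧ b.1 ⊆ Metric.ball y ((1/2 : ℝ) ^ (k + 1)) ∧ b.1 ⊆ V) ∧
          (a.2 < b.2 ∧ b.1 ⊆ a.1 ∧ ∀ z ∈ b.1, S^[b.2] z ∈ a.1) := by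
      rintro k ⟨O, m⟩ ⟨hOop, hyO, hOball, hOV⟩
      have hball : (0 : ℝ) < (1/2 : ℝ) ^ (k + 1) := by positivity
      have hnhds : O ∩ Metric.ball y ((1/2 : ℝ) ^ (k + 1)) ∈ nhds y :=
        (hOop.inter Metric.isOpen_ball).mem_nhds ⟨hyO, Metric.mem_ball_self hball⟩
      obtain ⟨m', hm'mem, hm'⟩ := (hyrec _ hnhds).exists_gt m
      refine ⟨(O ∩ Metric.ball y ((1/2 : ℝ) ^ (k + 1)) ∩ S^[m'] ⁻¹' O, m'), ⟨?_, ?_, ?_, ?_⟩,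
        hm', ?_, ?_⟩
      · exact (hOop.inter Metric.isOpen_ball).inter (hOop.preimage (hS.iterate m'))
      · exact ⟨⟨hyO, Metric.mem_ball_self hball⟩, hm'mem.1⟩
      · exact fun z hz => hz.1.2
      · exact fun z hz => hOV hz.1.1
      · exact fun z hz => hz.1.1
      · exact fun z hz => hz.2
    exact seq_rec _ _ _ h0 hstep
  obtain ⟨g, hg0, hgP, hgR⟩ := hYrec
  set Wn : ℕ → Set Y := fun k => (g k).1 with hWdef
  set pn : ℕ → ℕ := fun k => (g k).2 with hpdef
  have hp_lt : ∀ k, pn k < pn (k + 1) := fun k => (hgR k).1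
  have hp_ge : ∀ k, k ≤ pn k := by
    intro k
    induction k with
    | zero => exact Nat.zero_le _
    | succ k ih => exact Nat.lt_of_le_of_lt ih (hp_lt k)
  -- partial sums
  set q : ℕ → ℕ := fun k => ∑ i ∈ Finset.range k, pn (i + 1) with hqdef
  have hq_succ : ∀ k, q (k + 1) = q k + pn (k + 1) := fun k => Finset.sum_range_succ _ k
  -- segment sums
  set seg : ℕ → ℕ → ℕ := fun k d => ∑ i ∈ Finset.range d, pn (k + 1 + i) with hsegdef
  have hseg_q : ∀ k d, q (k + d) = q k + seg k d := by
    intro k d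
    induction d with
    | zero => simp [hsegdef]
    | succ d ih =>
      have h1 : k + (d + 1) = (k + d) + 1 := by ring
      rw [h1, hq_succ (k + d), ih]
      have h2 : seg k (d + 1) = seg k d + pn (k + 1 + d) := Finset.sum_range_succ _ d
      have h3 : k + 1 + d = k + d + 1 := by ring
      rw [h2, h3, Nat.add_assoc]
  have hseg_split : ∀ k d, seg k (d + 1) = pn (k + 1) + seg (k + 1) d := by
    intro k d
    simp only [hsegdef]
    rw [Finset.sum_range_succ']
    have hc : ∀ i ∈ Finset.range d, pn (k + 1 + (i + 1)) = pn (k + 1 + 1 + i) := by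
      intro i _; congr 1; omega
    rw [Finset.sum_congr rfl hc, Nat.add_zero]
    exact Nat.add_comm _ _
  have hseg_ge : ∀ k d, 0 < d → pn (k + d) ≤ seg k d := by
    intro k d hd
    rcases Nat.exists_eq_succ_of_ne_zero hd.ne' with ⟨d', rfl⟩
    simp only [hsegdef, Finset.sum_range_succ]
    have h : k + (d' + 1) = k + 1 + d' := by ring
    rw [h]
    exact Nat.le_add_left _ _
  -- the key claim: S^[seg k d] y ∈ W k
  have hkey : ∀ d k, S^[seg k d] y ∈ Wn k := by
    intro d
    induction d with
    | zero => intro k; simpa [hsegdef] using (hgP k).2.1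
    | succ d ih =>
      intro k
      rw [hseg_split k d, Function.iterate_add_apply]
      exact (hgR k).2.2 _ (ih (k + 1))
  ------------------------------------------------------------------
  -- Poincaré step
  ------------------------------------------------------------------
  have hfind : ∀ D : Set X, MeasurableSet D → μ D ≠ 0 → ∀ c : ℕ,
      ∃ n', c < n' ∧ S^[n'] y ∈ Metric.ball y ((1/2 : ℝ) ^ c) ∧ μ (D ∩ T^[n'] ⁻¹' D) ≠ 0 := by
    intro D hD hDpos c
    obtain ⟨i, j, hij, hpos⟩ := exists_pos_measure_inter μ (fun i => T^[q (c + i)] ⁻¹' D)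
      (fun i => (hTm.iterate _) hD) (μ D) hDpos
      (fun i => le_of_eq (hiter _ _ hD).symm)
    set d : ℕ := j - i with hddef
    have hdpos : 0 < d := Nat.sub_pos_of_lt hij
    have hcj : c + j = (c + i) + d := by omega
    set n' : ℕ := seg (c + i) d with hn'def
    have hqq : q (c + j) = q (c + i) + n' := by rw [hcj]; exact hseg_q (c + i) d
    have hinter : (T^[q (c + i)] ⁻¹' D) ∩ (T^[q (c + j)] ⁻¹' D)
        = T^[q (c + i)] ⁻¹' (D ∩ T^[n'] ⁻¹' D) := by
      ext x
      simp only [Set.mem_inter_iff, Set.mem_preimage]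
      constructor
      · rintro ⟨h1, h2⟩
        refine ⟨h1, ?_⟩
        rw [← Function.iterate_add_apply]
        rw [hqq, Nat.add_comm] at h2
        exact h2
      · rintro ⟨h1, h2⟩
        refine ⟨h1, ?_⟩
        rw [hqq, Nat.add_comm, Function.iterate_add_apply]
        exact h2
    refine ⟨n', ?_, ?_, ?_⟩
    · have h1 : pn ((c + i) + d) ≤ n' := hseg_ge _ _ hdpos
      have h2 : (c + i) + d ≤ pn ((c + i) + d) := hp_ge _
      omega
    · have h := hkey d (c + i)
      have hsub : Wn (c + i) ⊆ Metric.ball y ((1/2 : ℝ) ^ c) := by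
        refine (hgP (c + i)).2.2.1.trans (Metric.ball_subset_ball ?_)
        exact pow_le_pow_of_le_one (by norm_num) (by norm_num) (Nat.le_add_right c i)
      exact hsub h
    · rw [← hiter (q (c + i)) _ (hD.inter ((hTm.iterate n') hD)), ← hinter]
      exact hpos
  ------------------------------------------------------------------
  -- X side : nested balls
  ------------------------------------------------------------------
  obtain ⟨x0, hx0U⟩ : U.Nonempty := ⟨p0.1, hpU⟩
  obtain ⟨r, hr, hrU⟩ := Metric.isOpen_iff.1 hU x0 hx0U
  set r0 : ℝ := min (r / 2) (1 / 2) with hr0def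
  have hr0pos : 0 < r0 := by
    apply lt_min (by linarith) (by norm_num)
  have hD0cl : closure (Metric.ball x0 r0) ⊆ U := by
    refine (Metric.closure_ball_subset_closedBall.trans ?_)
    refine (Metric.closedBall_subset_ball ?_).trans hrU
    calc r0 ≤ r / 2 := min_le_left _ _
    _ < r := by linarith
  have hXrec : ∃ f : ℕ → Set X × ℕ,
      (∀ j, IsOpen (f j).1 ∧ (f j).1.Nonempty ∧ closure (f j).1 ⊆ U ∧
        ∃ xc, (f j).1 ⊆ Metric.ball xc ((1/2 : ℝ) ^ j)) ∧
      (∀ j, closure (f (j + 1)).1 ⊆ (f j).1 ∧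
        (∀ z ∈ closure (f (j + 1)).1, T^[(f (j + 1)).2] z ∈ (f j).1) ∧
        j < (f (j + 1)).2 ∧
        S^[(f (j + 1)).2] y ∈ Metric.ball y ((1/2 : ℝ) ^ j)) := by
    have h0 : IsOpen (Metric.ball x0 r0) ∧ (Metric.ball x0 r0).Nonempty ∧
        closure (Metric.ball x0 r0) ⊆ U ∧
        ∃ xc, Metric.ball x0 r0 ⊆ Metric.ball xc ((1/2 : ℝ) ^ 0) := by
      refine ⟨Metric.isOpen_ball, ⟨x0, Metric.mem_ball_self hr0pos⟩, hD0cl, x0, ?_⟩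
      apply Metric.ball_subset_ball
      calc r0 ≤ 1 / 2 := min_le_right _ _
      _ ≤ (1/2 : ℝ) ^ 0 := by norm_num
    have hstep : ∀ (j : ℕ) (a : Set X × ℕ),
        (IsOpen a.1 ∧ a.1.Nonempty ∧ closure a.1 ⊆ U ∧
          ∃ xc, a.1 ⊆ Metric.ball xc ((1/2 : ℝ) ^ j)) →
        ∃ b : Set X × ℕ,
          (IsOpen b.1 ∧ b.1.Nonempty ∧ closure b.1 ⊆ U ∧
            ∃ xc, b.1 ⊆ Metric.ball xc ((1/2 : ℝ) ^ (j + 1))) ∧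
          (closure b.1 ⊆ a.1 ∧ (∀ z ∈ closure b.1, T^[b.2] z ∈ a.1) ∧ j < b.2 ∧
            S^[b.2] y ∈ Metric.ball y ((1/2 : ℝ) ^ j)) := by
      rintro j ⟨D, n⟩ ⟨hDopen, hDne, hDU, xc, hDball⟩
      have hDpos : μ D ≠ 0 := (hsupp D hDopen hDne).ne'
      obtain ⟨n', hn'gt, hn'S, hn'pos⟩ := hfind D hDopen.measurableSet hDpos (j + 1)
      set G : Set X := D ∩ T^[n'] ⁻¹' D with hGdef
      have hGopen : IsOpen G := hDopen.inter (hDopen.preimage (hT.iterate n'))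
      have hGne : G.Nonempty := MeasureTheory.nonempty_of_measure_ne_zero hn'pos
      obtain ⟨x1, hx1⟩ := hGne
      obtain ⟨s, hs, hsG⟩ := Metric.isOpen_iff.1 hGopen x1 hx1
      set ρ : ℝ := min (s / 2) ((1/2 : ℝ) ^ (j + 1)) with hρdef
      have hρpos : 0 < ρ := lt_min (by linarith) (by positivity)
      have hclball : closure (Metric.ball x1 ρ) ⊆ G := by
        refine Metric.closure_ball_subset_closedBall.trans
          ((Metric.closedBall_subset_ball ?_).trans hsG)
        calc ρ ≤ s / 2 := min_le_left _ _
        _ < s := by linarith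
      refine ⟨(Metric.ball x1 ρ, n'), ⟨Metric.isOpen_ball,
        ⟨x1, Metric.mem_ball_self hρpos⟩, ?_, x1, Metric.ball_subset_ball (min_le_right _ _)⟩,
        ?_, ?_, by omega, ?_⟩
      · intro z hz
        exact hDU (subset_closure (hclball hz).1)
      · exact fun z hz => (hclball hz).1
      · exact fun z hz => (hclball hz).2
      · refine Metric.ball_subset_ball ?_ hn'S
        exact pow_le_pow_of_le_one (by norm_num) (by norm_num) (Nat.le_succ j)
    obtain ⟨f, _, hfP, hfR⟩ := seq_rec _ _ ((Metric.ball x0 r0, 0) : Set X × ℕ) h0 hstep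
    exact ⟨f, hfP, hfR⟩
  obtain ⟨f, hfP, hfR⟩ := hXrec
  -- the intersection point
  have hnestcl : ∀ j, closure (f (j + 1)).1 ⊆ closure (f j).1 :=
    fun j => (hfR j).1.trans subset_closure
  have hinter : (⋂ j, closure (f j).1).Nonempty := by
    apply IsCompact.nonempty_iInter_of_sequence_nonempty_isCompact_isClosed
      (fun j => closure (f j).1) hnestcl
      (fun j => (hfP j).2.1.closure)
      (isClosed_closure.isCompact)
      (fun j => isClosed_closure)
  obtain ⟨xs, hxs⟩ := hinter
  have hxsj : ∀ j, xs ∈ closure (f j).1 := fun j => Set.mem_iInter.1 hxs j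
  have hxsU : xs ∈ U := (hfP 0).2.2.1 (hxsj 0)
  refine ⟨(xs, y), hUVW ⟨hxsU, hyV⟩, ?_⟩
  -- recurrence
  intro O hO
  obtain ⟨ε, hε, hball⟩ := Metric.mem_nhds_iff.1 hO
  apply Set.infinite_of_not_bddAbove
  rw [not_bddAbove_iff]
  intro m
  -- choose j large
  obtain ⟨j0, hj0⟩ := exists_pow_lt_of_lt_one (x := ε / 2) (y := (1/2 : ℝ)) (by linarith)
    (by norm_num)
  set j : ℕ := max m j0 with hjdef
  have hjm : m ≤ j := le_max_left _ _
  have hjsmall : (1/2 : ℝ) ^ j < ε / 2 :=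
    lt_of_le_of_lt (pow_le_pow_of_le_one (by norm_num) (by norm_num) (le_max_right m j0)) hj0
  set n' : ℕ := (f (j + 1)).2 with hn'def
  refine ⟨n', ?_, lt_of_le_of_lt hjm (hfR j).2.2.1⟩
  show (Prod.map T S)^[n'] (xs, y) ∈ O
  apply hball
  have hxmem : xs ∈ closure (f (j + 1)).1 := hxsj (j + 1)
  obtain ⟨xc, hxc⟩ := (hfP j).2.2.2
  have h1 : T^[n'] xs ∈ (f j).1 := (hfR j).2.1 xs hxmem
  have h2 : xs ∈ (f j).1 := (hfR j).1 hxmem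
  have hdX : dist (T^[n'] xs) xs < ε := by
    have ht := dist_triangle_right (T^[n'] xs) xs xc
    have b1 : dist (T^[n'] xs) xc < (1/2 : ℝ) ^ j := hxc h1
    have b2 : dist xs xc < (1/2 : ℝ) ^ j := hxc h2
    linarith
  have hdY : dist (S^[n'] y) y < ε := by
    have hb := (hfR j).2.2.2
    rw [Metric.mem_ball] at hb
    linarith
  rw [Prod.map_iterate, Metric.mem_ball]
  show dist (T^[n'] xs, S^[n'] y) (xs, y) < ε
  rw [Prod.dist_eq]
  exact max_lt hdX hdY

end part2

/-! ### part 3 : spacing shifts -/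

/-- the shift on `ℕ → Bool` -/
def shiftB : (ℕ → Bool) → (ℕ → Bool) := fun x n => x (n + 1)

theorem shiftB_iterate (n : ℕ) (x : ℕ → Bool) (t : ℕ) : (shiftB^[n] x) t = x (t + n) := by
  induction n generalizing x t with
  | zero => rfl
  | succ n ih =>
    rw [Function.iterate_succ_apply, ih (shiftB x) t]
    show x (t + n + 1) = x (t + (n + 1))
    congr 1

/-- the spacing subshift -/
def SP (P : Set ℕ) : Set (ℕ → Bool) :=
  {x | ∀ i j : ℕ, i < j → x i = true → x j = true → (j - i) ∈ P}

theorem SP_closed (P : Set ℕ) : IsClosed (SP P) := by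
  have : SP P = ⋂ (i : ℕ), ⋂ (j : ℕ),
      {x : ℕ → Bool | i < j → x i = true → x j = true → (j - i) ∈ P} := by
    ext x
    simp only [SP, Set.mem_setOf_eq, Set.mem_iInter]
  rw [this]
  refine isClosed_iInter fun i => isClosed_iInter fun j => ?_
  by_cases hij : i < j
  · by_cases hP : (j - i) ∈ P
    · have : {x : ℕ → Bool | i < j → x i = true → x j = true → (j - i) ∈ P} = Set.univ := by
        ext x; simp [hij, hP]
      rw [this]; exact isClosed_univ
    · have : {x : ℕ → Bool | i < j → x i = true → x j = true → (j - i) ∈ P}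
          = {x : ℕ → Bool | x i = true}ᶜ ∪ {x : ℕ → Bool | x j = true}ᶜ := by
        ext x
        simp only [Set.mem_setOf_eq, Set.mem_union, Set.mem_compl_iff]
        constructor
        · intro h
          by_cases h1 : x i = true
          · by_cases h2 : x j = true
            · exact absurd (h hij h1 h2) hP
            · exact Or.inr h2
          · exact Or.inl h1
        · rintro (h1 | h1) <;> intro _ hi hj
          · exact absurd hi h1
          · exact absurd hj h1
      rw [this]
      have hop : ∀ k : ℕ, IsOpen {x : ℕ → Bool | x k = true} := fun k => by
        have : {x : ℕ → Bool | x k = true} = (fun x : ℕ → Bool => x k) ⁻¹' {true} := by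
          ext x; simp
        rw [this]
        exact IsOpen.preimage (continuous_apply k) (isOpen_discrete ({true} : Set Bool))
      exact ((hop i).isClosed_compl).union ((hop j).isClosed_compl)
  · have : {x : ℕ → Bool | i < j → x i = true → x j = true → (j - i) ∈ P} = Set.univ := by
      ext x; simp [hij]
    rw [this]; exact isClosed_univ

theorem shiftB_mem_SP {P : Set ℕ} {x : ℕ → Bool} (hx : x ∈ SP P) : shiftB x ∈ SP P := by
  intro i j hij hi hj
  have := hx (i + 1) (j + 1) (by omega) hi hj
  have heq : j + 1 - (i + 1) = j - i := by omega
  rwa [heq] at this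

/-- prepend false -/
def consF (x : ℕ → Bool) : ℕ → Bool := fun n => Nat.casesOn n false x

theorem consF_mem_SP {P : Set ℕ} {x : ℕ → Bool} (hx : x ∈ SP P) : consF x ∈ SP P := by
  intro i j hij hi hj
  match i, j with
  | 0, _ => simp [consF] at hi
  | _ + 1, 0 => omega
  | i + 1, j + 1 =>
    have := hx i j (by omega) hi hj
    have heq : j + 1 - (i + 1) = j - i := by omega
    rwa [heq]

theorem shiftB_consF (x : ℕ → Bool) : shiftB (consF x) = x := rfl

noncomputable instance : MetricSpace (ℕ → Bool) :=
  TopologicalSpace.metrizableSpaceMetric _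

/-- the spacing-shift system as a subtype -/
abbrev SPX (P : Set ℕ) : Type := {x : ℕ → Bool // x ∈ SP P}

instance SPX.compact (P : Set ℕ) : CompactSpace (SPX P) :=
  isCompact_iff_compactSpace.mp (SP_closed P).isCompact

/-- the shift restricted to the spacing shift -/
def Tm (P : Set ℕ) : SPX P → SPX P := fun x => ⟨shiftB x.val, shiftB_mem_SP x.2⟩

theorem shiftB_continuous : Continuous shiftB :=
  continuous_pi fun n => continuous_apply (n + 1)

theorem Tm_continuous (P : Set ℕ) : Continuous (Tm P) :=
  Continuous.subtype_mk (shiftB_continuous.comp continuous_subtype_val) _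

theorem Tm_surjective (P : Set ℕ) : Function.Surjective (Tm P) := fun x =>
  ⟨⟨consF x.val, consF_mem_SP x.2⟩, Subtype.ext (shiftB_consF x.val)⟩

theorem Tm_iter_val (P : Set ℕ) (n : ℕ) (x : SPX P) :
    ((Tm P)^[n] x).val = shiftB^[n] x.val := by
  induction n with
  | zero => rfl
  | succ n ih =>
    rw [Function.iterate_succ_apply', Function.iterate_succ_apply']
    show shiftB ((Tm P)^[n] x).val = shiftB (shiftB^[n] x.val)
    rw [ih]

/-- basic cylinders inside open sets of the subtype -/
theorem cylinder {P : Set ℕ} (U : Set (SPX P)) (hU : IsOpen U) (u : SPX P) (hu : u ∈ U) :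
    ∃ m, 0 < m ∧ ∀ z : SPX P, (∀ t, t < m → z.val t = u.val t) → z ∈ U := by
  obtain ⟨U', hU', hUeq⟩ := isOpen_induced_iff.mp hU
  have huU' : u.val ∈ U' := by
    rw [← hUeq] at hu; exact hu
  obtain ⟨I, op, hop, hsub⟩ := isOpen_pi_iff.mp hU' u.val huU'
  refine ⟨I.sup id + 1, Nat.succ_pos _, fun z hz => ?_⟩
  have hzU' : z.val ∈ U' := by
    apply hsub
    intro a ha
    have h1 : a < I.sup id + 1 := Nat.lt_succ_of_le (Finset.le_sup (f := id) ha)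
    rw [hz a h1]
    exact (hop a ha).2
  rw [← hUeq]
  exact hzU'

/-- glueing two admissible words with a large gap -/
theorem glue_mem_SP {P : Set ℕ} {u v : ℕ → Bool} (hu : u ∈ SP P) (hv : v ∈ SP P)
    (m s : ℕ) (hms : m ≤ s)
    (hsP : ∀ d, s - m < d → d < s + m → d ∈ P) :
    (fun t => if t < m then u t else if s ≤ t ∧ t < s + m then v (t - s) else false) ∈ SP P := by
  intro i j hij hi hj
  dsimp only at hi hj
  by_cases h1 : i < m
  · by_cases h2 : j < m
    · have hui : u i = true := by rwa [if_pos h1] at hi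
      have huj : u j = true := by rwa [if_pos h2] at hj
      exact hu i j hij hui huj
    · have hvj : s ≤ j ∧ j < s + m := by
        by_contra hc
        rw [if_neg h2, if_neg hc] at hj
        exact Bool.false_ne_true hj
      exact hsP (j - i) (by omega) (by omega)
  · have hvi : s ≤ i ∧ i < s + m := by
      by_contra hc
      rw [if_neg h1, if_neg hc] at hi
      exact Bool.false_ne_true hi
    have hvi' : v (i - s) = true := by rwa [if_neg h1, if_pos hvi] at hi
    have h2 : ¬ j < m := by omega
    have hvj : s ≤ j ∧ j < s + m := by
      by_contra hc
      rw [if_neg h2, if_neg hc] at hj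
      exact Bool.false_ne_true hj
    have hvj' : v (j - s) = true := by rwa [if_neg h2, if_pos hvj] at hj
    have hd := hv (i - s) (j - s) (by omega) hvi' hvj'
    have heq : j - s - (i - s) = j - i := by omega
    rwa [heq] at hd

/-- transitivity of spacing shifts over thick `P` -/
theorem SP_transitive (P : Set ℕ)
    (hthick : ∀ m : ℕ, 0 < m → ∀ b : ℕ, ∃ s : ℕ, b < s ∧ m ≤ s ∧
      ∀ d : ℕ, s - m < d → d < s + m → d ∈ P) :
    TransitiveSys (Tm P) := by
  intro U V hU hV hUne hVne
  obtain ⟨u, hu⟩ := hUne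
  obtain ⟨v, hv⟩ := hVne
  obtain ⟨mu, hmu0, hmu⟩ := cylinder U hU u hu
  obtain ⟨mv, hmv0, hmv⟩ := cylinder V hV v hv
  set m : ℕ := max mu mv with hmdef
  have hm0 : 0 < m := lt_of_lt_of_le hmu0 (le_max_left _ _)
  apply Set.infinite_of_not_bddAbove
  rw [not_bddAbove_iff]
  intro b
  obtain ⟨s, hbs, hms, hsP⟩ := hthick m hm0 b
  set w : ℕ → Bool :=
    fun t => if t < m then u.val t else if s ≤ t ∧ t < s + m then v.val (t - s) else false
    with hwdef
  have hw : w ∈ SP P := glue_mem_SP u.2 v.2 m s hms hsP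
  have hwu : ∀ t, t < m → w t = u.val t := by
    intro t ht
    simp only [hwdef, if_pos ht]
  have hwv : ∀ t, t < m → w (t + s) = v.val t := by
    intro t ht
    have h1 : ¬ (t + s < m) := by omega
    have h2 : s ≤ t + s ∧ t + s < s + m := by omega
    have h3 : t + s - s = t := by omega
    simp only [hwdef, if_neg h1, if_pos h2, h3]
  refine ⟨s, ⟨⟨w, hw⟩, ?_, ?_⟩, hbs⟩
  · apply hmu
    intro t ht
    exact hwu t (lt_of_lt_of_le ht (le_max_left _ _))
  · show (Tm P)^[s] ⟨w, hw⟩ ∈ V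
    apply hmv
    intro t ht
    rw [Tm_iter_val, shiftB_iterate]
    exact hwv t (lt_of_lt_of_le ht (le_max_right _ _))

def P3 : Set ℕ := {n | ∃ k : ℕ, 4 ^ k ≤ n ∧ n < 2 * 4 ^ k}
def Q3 : Set ℕ := {n | ∃ k : ℕ, 2 * 4 ^ k ≤ n ∧ n < 4 ^ (k + 1)}

theorem P3_thick : ∀ m : ℕ, 0 < m → ∀ b : ℕ, ∃ s : ℕ, b < s ∧ m ≤ s ∧
    ∀ d : ℕ, s - m < d → d < s + m → d ∈ P3 := by
  intro m hm b
  set k : ℕ := 2 * m + b with hkdef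
  have hk : 2 * m + b < 4 ^ k := Nat.lt_pow_self (by norm_num)
  exact ⟨4 ^ k + m, by omega, by omega, fun d h1 h2 => ⟨k, by omega, by omega⟩⟩

theorem Q3_thick : ∀ m : ℕ, 0 < m → ∀ b : ℕ, ∃ s : ℕ, b < s ∧ m ≤ s ∧
    ∀ d : ℕ, s - m < d → d < s + m → d ∈ Q3 := by
  intro m hm b
  set k : ℕ := 2 * m + b with hkdef
  have hk : 2 * m + b < 4 ^ k := Nat.lt_pow_self (by norm_num)
  have hp : 4 ^ (k + 1) = 4 * 4 ^ k := by ring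
  exact ⟨2 * 4 ^ k + m, by omega, by omega, fun d h1 h2 => ⟨k, by omega, by omega⟩⟩

theorem P3_Q3_disjoint : ∀ n : ℕ, n ∈ P3 → n ∈ Q3 → False := by
  rintro n ⟨k, hk1, hk2⟩ ⟨j, hj1, hj2⟩
  rcases le_or_gt k j with h | h
  · have : (4 : ℕ) ^ k ≤ 4 ^ j := Nat.pow_le_pow_right (by norm_num) h
    omega
  · have h1 : j + 1 ≤ k := h
    have : (4 : ℕ) ^ (j + 1) ≤ 4 ^ k := Nat.pow_le_pow_right (by norm_num) h1
    omega

def e0 : ℕ → Bool := fun n => decide (n = 0)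

theorem e0_mem_SP (P : Set ℕ) : e0 ∈ SP P := by
  intro i j hij hi hj
  have h1 : i = 0 := of_decide_eq_true hi
  have h2 : j = 0 := of_decide_eq_true hj
  omega

theorem part3 : ∃ (X Y : Type) (_ : MetricSpace X) (_ : CompactSpace X)
    (_ : MetricSpace Y) (_ : CompactSpace Y) (T : X → X) (S : Y → Y),
    Continuous T ∧ Function.Surjective T ∧ Continuous S ∧ Function.Surjective S ∧
    TransitiveSys T ∧ TransitiveSys S ∧
    ¬ Dense {p : X × Y | RecurrentPt (Prod.map T S) p} := by
  refine ⟨SPX P3, SPX Q3, inferInstance, inferInstance, inferInstance, inferInstance,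
    Tm P3, Tm Q3, Tm_continuous P3, Tm_surjective P3, Tm_continuous Q3, Tm_surjective Q3,
    SP_transitive P3 P3_thick, SP_transitive Q3 Q3_thick, ?_⟩
  intro hD
  have hopamb : IsOpen {x : ℕ → Bool | x 0 = true} := by
    have : {x : ℕ → Bool | x 0 = true} = (fun x : ℕ → Bool => x 0) ⁻¹' {true} := by
      ext x; simp
    rw [this]
    exact IsOpen.preimage (continuous_apply 0) (isOpen_discrete ({true} : Set Bool))
  have hO1 : IsOpen {x : SPX P3 | x.val 0 = true} :=
    hopamb.preimage continuous_subtype_val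
  have hO2 : IsOpen {y : SPX Q3 | y.val 0 = true} :=
    hopamb.preimage continuous_subtype_val
  have hO : IsOpen ({x : SPX P3 | x.val 0 = true} ×ˢ {y : SPX Q3 | y.val 0 = true}) :=
    hO1.prod hO2
  have hOne : ({x : SPX P3 | x.val 0 = true} ×ˢ {y : SPX Q3 | y.val 0 = true}).Nonempty :=
    ⟨(⟨e0, e0_mem_SP P3⟩, ⟨e0, e0_mem_SP Q3⟩), rfl, rfl⟩
  obtain ⟨⟨x, y⟩, ⟨hxO, hyO⟩, hrec⟩ := hD.inter_open_nonempty _ hO hOne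
  have hmem : ({x : SPX P3 | x.val 0 = true} ×ˢ {y : SPX Q3 | y.val 0 = true})
      ∈ nhds (x, y) := hO.mem_nhds ⟨hxO, hyO⟩
  obtain ⟨n, hn, hn0⟩ := (hrec _ hmem).exists_gt 0
  have hn' : (Prod.map (Tm P3) (Tm Q3))^[n] (x, y)
      ∈ ({x : SPX P3 | x.val 0 = true} ×ˢ {y : SPX Q3 | y.val 0 = true}) := hn
  rw [Prod.map_iterate] at hn'
  obtain ⟨hx1, hy1⟩ := hn'
  have hxn : x.val n = true := by
    have h2 : ((Tm P3)^[n] x).val 0 = true := hx1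
    rw [Tm_iter_val, shiftB_iterate, Nat.zero_add] at h2
    exact h2
  have hyn : y.val n = true := by
    have h2 : ((Tm Q3)^[n] y).val 0 = true := hy1
    rw [Tm_iter_val, shiftB_iterate, Nat.zero_add] at h2
    exact h2
  have hP : n ∈ P3 := by
    have := x.2 0 n hn0 hxO hxn
    rwa [Nat.sub_zero] at this
  have hQ : n ∈ Q3 := by
    have := y.2 0 n hn0 hyO hyn
    rwa [Nat.sub_zero] at this
  exact P3_Q3_disjoint n hP hQ

/-- (1) products of systems with dense minimal points have dense minimal
points; (2) if `X` carries an invariant Borel probability measure with full support and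
`Y` has dense recurrent points, then `X × Y` has dense recurrent points; (3) there are
transitive systems whose product has no dense set of recurrent points. -/
theorem statement_15 :
    (∀ (X Y : Type) [MetricSpace X] [CompactSpace X] [MetricSpace Y] [CompactSpace Y]
      (T : X → X) (S : Y → Y),
        Continuous T → Function.Surjective T → Continuous S → Function.Surjective S →
        Dense {x : X | IsMinimalPt T x} → Dense {y : Y | IsMinimalPt S y} →
        Dense {p : X × Y | IsMinimalPt (Prod.map T S) p}) ∧
    (∀ (X Y : Type) [MetricSpace X] [CompactSpace X] [MeasurableSpace X] [BorelSpace X]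
      [MetricSpace Y] [CompactSpace Y] (T : X → X) (S : Y → Y),
        Continuous T → Function.Surjective T → Continuous S → Function.Surjective S →
        (∃ μ : MeasureTheory.Measure X, MeasureTheory.IsProbabilityMeasure μ ∧
          (∀ B : Set X, MeasurableSet B → μ (T ⁻¹' B) = μ B) ∧
          ∀ U : Set X, IsOpen U → U.Nonempty → 0 < μ U) →
        Dense {y : Y | RecurrentPt S y} →
        Dense {p : X × Y | RecurrentPt (Prod.map T S) p}) ∧
    (∃ (X Y : Type) (_ : MetricSpace X) (_ : CompactSpace X)
      (_ : MetricSpace Y) (_ : CompactSpace Y) (T : X → X) (S : Y → Y),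
        Continuous T ∧ Function.Surjective T ∧ Continuous S ∧ Function.Surjective S ∧
        TransitiveSys T ∧ TransitiveSys S ∧
        ¬ Dense {p : X × Y | RecurrentPt (Prod.map T S) p}) := by
  refine ⟨?_, ?_, part3⟩
  · intro X Y _ _ _ _ T S hT hTs hS hSs hDX hDY
    exact part1 hT hTs hS hSs hDX hDY
  · intro X Y _ _ _ _ _ _ T S hT hTs hS hSs hmeas hDY
    exact part2 hT hTs hS hSs hmeas hDY

end PaperFormal
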